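/- Let X = [-1,1]^d and let A₁, …, A_k be mutually disjoint subsets of X such that for each i ∈ {1,…,k} there exist z_i⁻, z_i⁺ ∈ X with z_i⁻ < z_i⁺ (coordinatewise) and (z_i⁻, z_i⁺) ⊂ A_i ⊂ [z_i⁻, z_i⁺]. Let f := Σ_{i=1}^k α_i 1_{A_i} with α_i ∈ ℝ, and let ε > 0 satisfy ε < min{(z_{i,j}⁺ − z_{i,j}⁻)/2 : i = 1,…,k, j = 1,…,d}. Then for all m₁ ≥ 2dk and m₂ ≥ k there exists a ReLU neural network g_ε of architecture (d, m₁, m₂, 1) (two hidden layers of widths m₁ and m₂) such that g_ε(x) = f(x) for every x ∈ (∪_{i=1}^k [z_i⁻+ε, z_i⁺−ε]) ∪ (X \ ∪_{i=1}^k [z_i⁻, z_i⁺]); in particular {x ∈ X : f(x) ≠ g_ε(x)} ⊂ ∪_{i=1}^k ([z_i⁻, z_i⁺] \ [z_i⁻+ε, z_i⁺−ε]). -/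
import Mathlib


open MeasureTheory ENNReal Filter Set
open scoped Classical

noncomputable section

namespace Pantry

abbrev E (d : ℕ) := Fin d → ℝ

/-- The input space `X = [-1,1]^d`. -/
def Xcube (d : ℕ) : Set (E d) := Set.Icc (fun _ => -1) (fun _ => 1)

/-- The closed `ℓ^∞`-ball `x + t·B_∞`. -/
def linfBall {d : ℕ} (x : E d) (t : ℝ) : Set (E d) :=
  Set.Icc (fun i => x i - t) (fun i => x i + t)

/-- sign with `sign 0 = 1`. -/
def sgn (t : ℝ) : ℝ := if t < 0 then -1 else 1

/-- Least squares loss. -/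
def Lls (y t : ℝ) : ℝ := (y - t) ^ 2

/-- Hinge loss. -/
def Lhinge (y t : ℝ) : ℝ := max 0 (1 - t * y)

/-- Classification loss. -/
def Lclass (y t : ℝ) : ℝ := if y * sgn t ≤ 0 then 1 else 0

/-- Risk of a predictor. -/
def Risk {d : ℕ} (L : ℝ → ℝ → ℝ) (P : Measure (E d × ℝ)) (f : E d → ℝ) : ℝ :=
  ∫ p, L p.2 (f p.1) ∂P

/-- Bayes risk: infimum of the risk over measurable predictors. -/
def BayesRisk {d : ℕ} (L : ℝ → ℝ → ℝ) (P : Measure (E d × ℝ)) : ℝ :=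
  ⨅ f : {f : E d → ℝ // Measurable f}, Risk L P f.1

/-- Empirical risk. -/
def EmpRisk {d n : ℕ} (L : ℝ → ℝ → ℝ) (D : Fin n → E d × ℝ) (f : E d → ℝ) : ℝ :=
  (1 / (n : ℝ)) * ∑ i, L (D i).2 (f (D i).1)

/-- `f` interpolates the data set `D`. -/
def Interpolates {d n : ℕ} (L : ℝ → ℝ → ℝ) (D : Fin n → E d × ℝ) (f : E d → ℝ) : Prop :=
  EmpRisk L D f = ⨅ g : E d → ℝ, EmpRisk L D g

/-- Assumption (A): `P_X(x + t·B_∞) ≤ c·t`. -/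
def AssumptionA {d : ℕ} (P : Measure (E d × ℝ)) (c : ℝ) : Prop :=
  0 < c ∧ ∀ t : ℝ, 0 ≤ t → ∀ x ∈ Xcube d,
    P.map Prod.fst (linfBall x t) ≤ ENNReal.ofReal (c * t)

/-- The `n`-fold product measure `P^n`. -/
def Pn {d : ℕ} (P : Measure (E d × ℝ)) (n : ℕ) : Measure (Fin n → E d × ℝ) :=
  Measure.pi fun _ => P

/-- `P` is supported on `X × Y`. -/
def SuppXY {d : ℕ} (P : Measure (E d × ℝ)) (Y : Set ℝ) : Prop :=
  ∀ᵐ p ∂P, p.1 ∈ Xcube d ∧ p.2 ∈ Y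

/-- Squared `L²(P_X)`-distance. -/
def L2sq {d : ℕ} (P : Measure (E d × ℝ)) (f g : E d → ℝ) : ℝ :=
  ∫ x, (f x - g x) ^ 2 ∂(P.map Prod.fst)

/-- Lower-left corner of the cell of the cubic partition (offset `off`, width `s`)
containing `x`. -/
def cellLo {d : ℕ} (off : E d) (s : ℝ) (x : E d) : E d :=
  fun i => off i + s * (⌊(x i - off i) / s⌋ : ℝ)

/-- The cell `B(x)` of the cubic partition of width `s` and offset `off` containing `x`. -/
def cell {d : ℕ} (off : E d) (s : ℝ) (x : E d) : Set (E d) :=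
  { z | ∀ i, cellLo off s x i ≤ z i ∧ z i < cellLo off s x i + s }

/-- A function is constant on each cell of the cubic partition. -/
def ConstOnCells {d : ℕ} (off : E d) (s : ℝ) (h : E d → ℝ) : Prop :=
  ∀ x z : E d, z ∈ cell off s x → h z = h x

/-- The hypotheses class `H_A` of `Y`-valued histograms for the cubic partition with
offset `off` and width `s`. -/
def Hist {d : ℕ} (off : E d) (s : ℝ) (Y : Set ℝ) : Set (E d → ℝ) :=
  { h | ConstOnCells off s h ∧ ∀ x, h x ∈ Y }

/-- Indices of data points falling in the cell of `x`. -/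
def dataCell {d n : ℕ} (off : E d) (s : ℝ) (D : Fin n → E d × ℝ) (x : E d) : Finset (Fin n) :=
  Finset.univ.filter (fun i => (D i).1 ∈ cell off s x)

/-- `h` is an empirical histogram rule for regression (HRR): a `[-1,1]`-valued histogram
given by label averages on non-empty cells. -/
def IsHRR {d n : ℕ} (off : E d) (s : ℝ) (D : Fin n → E d × ℝ) (h : E d → ℝ) : Prop :=
  h ∈ Hist off s (Set.Icc (-1 : ℝ) 1) ∧
  ∀ x : E d, 0 < (dataCell off s D x).card →
    h x = (∑ i ∈ dataCell off s D x, (D i).2) / ((dataCell off s D x).card : ℝ)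

/-- `ε`-covering number of a class of functions w.r.t. the sup-norm on `X`. -/
def covNum {d : ℕ} (H : Set (E d → ℝ)) (ε : ℝ) : ℝ :=
  sInf { r : ℝ | ∃ G : Finset (E d → ℝ), r = (G.card : ℝ) ∧
    ∀ h ∈ H, ∃ g ∈ G, ∀ x ∈ Xcube d, |h x - g x| ≤ ε }

/-- `R*_{L_ls,P,H_A}`: the smallest risk over the histogram class. -/
def HistBayes {d : ℕ} (P : Measure (E d × ℝ)) (off : E d) (s : ℝ) : ℝ :=
  ⨅ h : (Hist off s (Set.Icc (-1 : ℝ) 1)), Risk Lls P h.1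

/-- ReLU. -/
def relu (t : ℝ) : ℝ := max 0 t

/-- ReLU networks with two hidden layers of widths `p₁`, `p₂`. -/
def NN2 (d p₁ p₂ : ℕ) : Set (E d → ℝ) :=
  { f | ∃ (A1 : Fin p₁ → E d) (b1 : Fin p₁ → ℝ) (A2 : Fin p₂ → Fin p₁ → ℝ)
        (b2 : Fin p₂ → ℝ) (a : Fin p₂ → ℝ) (b : ℝ),
      f = fun x =>
        (∑ j, a j * relu ((∑ i, A2 j i * relu ((∑ k, A1 i k * x k) + b1 i)) + b2 j)) + b }

/-- ReLU networks with hidden widths given by the list `ks`, input dimension `m`,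
scalar output without final activation. -/
def NNAux : (m : ℕ) → List ℕ → Set ((Fin m → ℝ) → ℝ)
  | m, [] => { f | ∃ (a : Fin m → ℝ) (b : ℝ), f = fun x => (∑ i, a i * x i) + b }
  | m, k :: ks => { f | ∃ (A : Fin k → Fin m → ℝ) (bv : Fin k → ℝ),
      ∃ g ∈ NNAux k ks, f = fun x => g (fun j => relu ((∑ i, A j i * x i) + bv j)) }

/-- The ReLU bump approximating the indicator of `[z1, z2]` with accuracy `ρ`. -/
def bump {d : ℕ} (z1 z2 : E d) (ρ : ℝ) (x : E d) : ℝ :=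
  relu ((∑ i, (1 - relu ((z1 i + ρ - x i) / ρ) - relu ((x i - z2 i + ρ) / ρ))) - (d : ℝ) + 1)

/-- The `ε`-approximate histogram part: each cell indicator replaced by its `ε`-bump,
restricted to the cell. -/
def histEps {d : ℕ} (off : E d) (s ε : ℝ) (cfun : E d → ℝ) (x : E d) : ℝ :=
  cfun x * bump (cellLo off s x) (fun i => cellLo off s x i + s) ε x

/-- Data indices sharing the input `x`. -/
def sameX {d n : ℕ} (D : Fin n → E d × ℝ) (x : E d) : Finset (Fin n) :=
  Finset.univ.filter (fun k => (D k).1 = x)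

/-- The loss `L` is interpolatable for `D`. -/
def Interpolatable {d n : ℕ} (L : ℝ → ℝ → ℝ) (Y : Set ℝ) (D : Fin n → E d × ℝ) : Prop :=
  ∃ f : E d → ℝ, (∀ x ∈ Xcube d, f x ∈ Y) ∧
    ∀ i : Fin n, (∑ k ∈ sameX D (D i).1, L (D k).2 (f (D i).1)) =
      ⨅ c : ℝ, ∑ k ∈ sameX D (D i).1, L (D k).2 c

/-- Empirical risk for a general (input-dependent) loss. -/
def EmpRiskG {γ : Type*} {n : ℕ} (ℓ : γ → ℝ → ℝ → ℝ) (D : Fin n → γ × ℝ) (f : γ → ℝ) : ℝ :=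
  (1 / (n : ℝ)) * ∑ i, ℓ (D i).1 (D i).2 (f (D i).1)

/-- Risk for a general (input-dependent) loss. -/
def RiskG {γ : Type*} [MeasurableSpace γ] (ℓ : γ → ℝ → ℝ → ℝ) (P : Measure (γ × ℝ))
    (f : γ → ℝ) : ℝ :=
  ∫ p, ℓ p.1 p.2 (f p.1) ∂P

/-- Bayes risk for a general loss. -/
def BayesRiskG {γ : Type*} [MeasurableSpace γ] (ℓ : γ → ℝ → ℝ → ℝ)
    (P : Measure (γ × ℝ)) : ℝ :=
  ⨅ f : {f : γ → ℝ // Measurable f}, RiskG ℓ P f.1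

/-- Number of data points in the cell `parts j`. -/
def Nj {γ : Type*} {m n : ℕ} (parts : Fin m → Set γ) (D : Fin n → γ × ℝ) (j : Fin m) : ℕ :=
  (Finset.univ.filter (fun i => (D i).1 ∈ parts j)).card

/-- Sum of labels of data points in the cell `parts j`. -/
def Sj {γ : Type*} {m n : ℕ} (parts : Fin m → Set γ) (D : Fin n → γ × ℝ) (j : Fin m) : ℝ :=
  ∑ i ∈ Finset.univ.filter (fun i => (D i).1 ∈ parts j), (D i).2

/-- Marginal distribution on the input space. -/
def PX {d : ℕ} (P : Measure (E d × ℝ)) : Measure (E d) := P.map Prod.fst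

/-- Infinite-sample histogram `h_{P,A}`. -/
def hPA {d : ℕ} (P : Measure (E d × ℝ)) (off : E d) (s : ℝ) (fstar : E d → ℝ) (x : E d) : ℝ :=
  if PX P (cell off s x) ≠ 0
  then (∫ z in cell off s x, fstar z ∂(PX P)) / (PX P (cell off s x)).toReal
  else 0

/-- approximation of histograms by two-hidden-layer ReLU networks. -/
theorem statement7 (d k : ℕ) (hd : 1 ≤ d)
    (A : Fin k → Set (E d)) (hsub : ∀ i, A i ⊆ Xcube d)
    (hdisj : ∀ i j, i ≠ j → Disjoint (A i) (A j))
    (zm zp : Fin k → E d) (hz : ∀ i, ∀ j, zm i j < zp i j)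
    (hzX : ∀ i, zm i ∈ Xcube d ∧ zp i ∈ Xcube d)
    (hAlo : ∀ i, {x : E d | ∀ j, zm i j < x j ∧ x j < zp i j} ⊆ A i)
    (hAhi : ∀ i, A i ⊆ Set.Icc (zm i) (zp i))
    (α : Fin k → ℝ) (ε : ℝ) (hε : 0 < ε)
    (hεlt : ∀ i j, ε < (zp i j - zm i j) / 2)
    (m₁ m₂ : ℕ) (hm₁ : 2 * d * k ≤ m₁) (hm₂ : k ≤ m₂) :
    ∃ g ∈ NN2 d m₁ m₂,
      ∀ x ∈ (⋃ i, Set.Icc (fun j => zm i j + ε) (fun j => zp i j - ε)) ∪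
          (Xcube d \ ⋃ i, Set.Icc (zm i) (zp i)),
        g x = ∑ i, α i * (A i).indicator 1 x := by
  classical
  have hd2 : 0 < 2 * d := by omega
  have hik : ∀ t : ℕ, t < 2 * d * k → t / (2 * d) < k := fun t ht => Nat.div_lt_of_lt_mul ht
  have hjd : ∀ t : ℕ, t % (2 * d) / 2 < d := fun t => by
    have := Nat.mod_lt t hd2; omega
  set A1 : Fin m₁ → E d := fun t c =>
    if ((t : ℕ) < 2 * d * k ∧ (c : ℕ) = (t : ℕ) % (2 * d) / 2) then
      (if (t : ℕ) % 2 = 0 then -(1/ε) else 1/ε) else 0 with hA1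
  set b1 : Fin m₁ → ℝ := fun t =>
    if ht : (t : ℕ) < 2 * d * k then
      (if (t : ℕ) % 2 = 0 then (zm ⟨_, hik _ ht⟩ ⟨_, hjd (t : ℕ)⟩ + ε) / ε
       else (ε - zp ⟨_, hik _ ht⟩ ⟨_, hjd (t : ℕ)⟩) / ε)
    else 0 with hb1
  set A2 : Fin m₂ → Fin m₁ → ℝ := fun s t =>
    if ((s : ℕ) < k ∧ (t : ℕ) < 2 * d * k ∧ (t : ℕ) / (2 * d) = (s : ℕ)) then -1 else 0 with hA2
  set av : Fin m₂ → ℝ := fun s => if hs : (s : ℕ) < k then α ⟨s, hs⟩ else 0 with hav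
  refine ⟨_, ⟨A1, b1, A2, fun _ => 1, av, 0, rfl⟩, ?_⟩
  intro x hx
  beta_reduce
  set R : Fin m₁ → ℝ := fun t => relu ((∑ c, A1 t c * x c) + b1 t) with hRdef
  have hR0 : ∀ t, 0 ≤ R t := fun t => le_max_left 0 _
  have hsum1 : ∀ t : Fin m₁, (∑ c, A1 t c * x c) =
      (if (t : ℕ) < 2 * d * k then
        (if (t : ℕ) % 2 = 0 then -(1/ε) else 1/ε) * x ⟨_, hjd (t : ℕ)⟩ else 0) := by
    intro t
    by_cases ht : (t : ℕ) < 2 * d * k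
    · rw [if_pos ht]
      rw [Finset.sum_eq_single (⟨(t : ℕ) % (2 * d) / 2, hjd _⟩ : Fin d)]
      · simp [hA1, ht]
      · intro c _ hc
        have hc' : ¬((c : ℕ) = (t : ℕ) % (2 * d) / 2) := fun h => hc (Fin.ext h)
        simp [hA1, hc']
      · simp
    · rw [if_neg ht]
      apply Finset.sum_eq_zero
      intro c _
      simp [hA1, ht]
  have hTval : ∀ s : Fin m₂, (∑ t, A2 s t * R t) =
      - ∑ t ∈ Finset.univ.filter
          (fun t : Fin m₁ => (s : ℕ) < k ∧ (t : ℕ) < 2 * d * k ∧ (t : ℕ) / (2 * d) = (s : ℕ)),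
        R t := by
    intro s
    have h1 : ∀ t : Fin m₁, A2 s t * R t =
        (if ((s : ℕ) < k ∧ (t : ℕ) < 2 * d * k ∧ (t : ℕ) / (2 * d) = (s : ℕ)) then -R t else 0) := by
      intro t
      simp only [hA2]
      split <;> ring
    rw [Finset.sum_congr rfl fun t _ => h1 t, ← Finset.sum_filter, Finset.sum_neg_distrib]
  -- value of R at a valid neuron, lower bump side
  have hRlo : ∀ (t : Fin m₁) (ht : (t : ℕ) < 2 * d * k), (t : ℕ) % 2 = 0 →
      R t = relu ((zm ⟨_, hik _ ht⟩ ⟨_, hjd (t : ℕ)⟩ + ε - x ⟨_, hjd (t : ℕ)⟩) / ε) := by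
    intro t ht hpar
    rw [hRdef]
    simp only [hsum1, if_pos ht, hb1, dif_pos ht, if_pos hpar]
    congr 1
    field_simp
    ring
  have hRhi : ∀ (t : Fin m₁) (ht : (t : ℕ) < 2 * d * k), ¬((t : ℕ) % 2 = 0) →
      R t = relu ((x ⟨_, hjd (t : ℕ)⟩ - zp ⟨_, hik _ ht⟩ ⟨_, hjd (t : ℕ)⟩ + ε) / ε) := by
    intro t ht hpar
    rw [hRdef]
    simp only [hsum1, if_pos ht, hb1, dif_pos ht, if_neg hpar]
    congr 1
    field_simp
    ring
  have hcase1 : ∀ (i : Fin k) (s : Fin m₂), (s : ℕ) = (i : ℕ) →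
      (∀ j, zm i j + ε ≤ x j ∧ x j ≤ zp i j - ε) →
      relu ((∑ t, A2 s t * R t) + 1) = 1 := by
    intro i s hsi hxin
    rw [hTval s]
    have hz0 : (∑ t ∈ Finset.univ.filter
        (fun t : Fin m₁ => (s : ℕ) < k ∧ (t : ℕ) < 2 * d * k ∧ (t : ℕ) / (2 * d) = (s : ℕ)),
        R t) = 0 := by
      apply Finset.sum_eq_zero
      intro t htm
      simp only [Finset.mem_filter, Finset.mem_univ, true_and] at htm
      obtain ⟨hsk', ht, hdiv⟩ := htm
      have hiF : (⟨(t : ℕ) / (2 * d), hik _ ht⟩ : Fin k) = i := Fin.ext (by simp [hdiv, hsi])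
      by_cases hpar : (t : ℕ) % 2 = 0
      · rw [hRlo t ht hpar, hiF]
        have hle : (zm i ⟨_, hjd (t : ℕ)⟩ + ε - x ⟨_, hjd (t : ℕ)⟩) / ε ≤ 0 :=
          div_nonpos_of_nonpos_of_nonneg (by linarith [(hxin ⟨_, hjd (t : ℕ)⟩).1]) hε.le
        exact max_eq_left hle
      · rw [hRhi t ht hpar, hiF]
        have hle : (x ⟨_, hjd (t : ℕ)⟩ - zp i ⟨_, hjd (t : ℕ)⟩ + ε) / ε ≤ 0 :=
          div_nonpos_of_nonpos_of_nonneg (by linarith [(hxin ⟨_, hjd (t : ℕ)⟩).2]) hε.le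
        exact max_eq_left hle
    rw [hz0]
    norm_num [relu]
  have hcase2 : ∀ (i : Fin k) (s : Fin m₂), (s : ℕ) = (i : ℕ) →
      (∃ c, x c ≤ zm i c ∨ zp i c ≤ x c) →
      relu ((∑ t, A2 s t * R t) + 1) = 0 := by
    intro i s hsi hex
    obtain ⟨c, hc⟩ := hex
    rw [hTval s]
    have hsk : (s : ℕ) < k := by rw [hsi]; exact i.2
    suffices h1 : 1 ≤ ∑ t ∈ Finset.univ.filter
        (fun t : Fin m₁ => (s : ℕ) < k ∧ (t : ℕ) < 2 * d * k ∧ (t : ℕ) / (2 * d) = (s : ℕ)),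
        R t by
      exact max_eq_left (by linarith)
    have h2d : 2 * d * ((s : ℕ) + 1) ≤ 2 * d * k := Nat.mul_le_mul_left _ hsk
    rcases hc with hc | hc
    · -- lower side neuron: t₀ = 2d·s + 2c
      have hcd : 2 * (c : ℕ) < 2 * d := by have := c.2; omega
      have htv : 2 * d * (s : ℕ) + 2 * (c : ℕ) < 2 * d * k := by
        calc 2 * d * (s : ℕ) + 2 * (c : ℕ) < 2 * d * (s : ℕ) + 2 * d :=
              Nat.add_lt_add_left hcd _
          _ = 2 * d * ((s : ℕ) + 1) := by ring
          _ ≤ 2 * d * k := h2d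
      set t₀ : Fin m₁ := ⟨2 * d * (s : ℕ) + 2 * (c : ℕ), lt_of_lt_of_le htv hm₁⟩ with ht₀
      have hdiv : (t₀ : ℕ) / (2 * d) = (s : ℕ) := by
        show (2 * d * (s : ℕ) + 2 * (c : ℕ)) / (2 * d) = (s : ℕ)
        rw [Nat.mul_add_div hd2, Nat.div_eq_of_lt hcd, add_zero]
      have hmod : (t₀ : ℕ) % (2 * d) = 2 * (c : ℕ) := by
        show (2 * d * (s : ℕ) + 2 * (c : ℕ)) % (2 * d) = 2 * (c : ℕ)
        rw [Nat.mul_add_mod, Nat.mod_eq_of_lt hcd]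
      have hpar : (t₀ : ℕ) % 2 = 0 := by
        show (2 * d * (s : ℕ) + 2 * (c : ℕ)) % 2 = 0
        have he : 2 * d * (s : ℕ) + 2 * (c : ℕ) = 2 * (d * (s : ℕ) + (c : ℕ)) := by ring
        rw [he, Nat.mul_mod_right]
      have hji : (⟨(t₀ : ℕ) % (2 * d) / 2, hjd (t₀ : ℕ)⟩ : Fin d) = c := by
        apply Fin.ext
        simp only [hmod]
        omega
      have hiF : (⟨(t₀ : ℕ) / (2 * d), hik _ htv⟩ : Fin k) = i := by
        apply Fin.ext
        show (t₀ : ℕ) / (2 * d) = (i : ℕ)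
        rw [hdiv, hsi]
      have hmem : t₀ ∈ Finset.univ.filter
          (fun t : Fin m₁ => (s : ℕ) < k ∧ (t : ℕ) < 2 * d * k ∧ (t : ℕ) / (2 * d) = (s : ℕ)) := by
        simp only [Finset.mem_filter, Finset.mem_univ, true_and]
        exact ⟨hsk, htv, hdiv⟩
      have hRt : 1 ≤ R t₀ := by
        rw [hRlo t₀ htv hpar, hiF, hji]
        have harg : (1 : ℝ) ≤ (zm i c + ε - x c) / ε := by
          rw [le_div_iff₀ hε]
          linarith
        exact le_trans harg (le_max_right 0 _)
      calc (1 : ℝ) ≤ R t₀ := hRt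
        _ ≤ _ := Finset.single_le_sum (fun t _ => hR0 t) hmem
    · -- upper side neuron: t₀ = 2d·s + 2c + 1
      have hcd : 2 * (c : ℕ) + 1 < 2 * d := by have := c.2; omega
      have htv : 2 * d * (s : ℕ) + (2 * (c : ℕ) + 1) < 2 * d * k := by
        calc 2 * d * (s : ℕ) + (2 * (c : ℕ) + 1) < 2 * d * (s : ℕ) + 2 * d :=
              Nat.add_lt_add_left hcd _
          _ = 2 * d * ((s : ℕ) + 1) := by ring
          _ ≤ 2 * d * k := h2d
      set t₀ : Fin m₁ := ⟨2 * d * (s : ℕ) + (2 * (c : ℕ) + 1), lt_of_lt_of_le htv hm₁⟩ with ht₀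
      have hdiv : (t₀ : ℕ) / (2 * d) = (s : ℕ) := by
        show (2 * d * (s : ℕ) + (2 * (c : ℕ) + 1)) / (2 * d) = (s : ℕ)
        rw [Nat.mul_add_div hd2, Nat.div_eq_of_lt hcd, add_zero]
      have hmod : (t₀ : ℕ) % (2 * d) = 2 * (c : ℕ) + 1 := by
        show (2 * d * (s : ℕ) + (2 * (c : ℕ) + 1)) % (2 * d) = 2 * (c : ℕ) + 1
        rw [Nat.mul_add_mod, Nat.mod_eq_of_lt hcd]
      have hpar : ¬((t₀ : ℕ) % 2 = 0) := by
        show ¬((2 * d * (s : ℕ) + (2 * (c : ℕ) + 1)) % 2 = 0)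
        have he : 2 * d * (s : ℕ) + (2 * (c : ℕ) + 1) = 2 * (d * (s : ℕ) + (c : ℕ)) + 1 := by ring
        rw [he, Nat.mul_add_mod]
        omega
      have hji : (⟨(t₀ : ℕ) % (2 * d) / 2, hjd (t₀ : ℕ)⟩ : Fin d) = c := by
        apply Fin.ext
        simp only [hmod]
        omega
      have hiF : (⟨(t₀ : ℕ) / (2 * d), hik _ htv⟩ : Fin k) = i := by
        apply Fin.ext
        show (t₀ : ℕ) / (2 * d) = (i : ℕ)
        rw [hdiv, hsi]
      have hmem : t₀ ∈ Finset.univ.filter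
          (fun t : Fin m₁ => (s : ℕ) < k ∧ (t : ℕ) < 2 * d * k ∧ (t : ℕ) / (2 * d) = (s : ℕ)) := by
        simp only [Finset.mem_filter, Finset.mem_univ, true_and]
        exact ⟨hsk, htv, hdiv⟩
      have hRt : 1 ≤ R t₀ := by
        rw [hRhi t₀ htv hpar, hiF, hji]
        have harg : (1 : ℝ) ≤ (x c - zp i c + ε) / ε := by
          rw [le_div_iff₀ hε]
          linarith
        exact le_trans harg (le_max_right 0 _)
      calc (1 : ℝ) ≤ R t₀ := hRt
        _ ≤ _ := Finset.single_le_sum (fun t _ => hR0 t) hmem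
  -- reindex the outer sum from Fin m₂ to Fin k
  rw [add_zero]
  have hreindex : (∑ s : Fin m₂, av s * relu ((∑ t, A2 s t * R t) + 1))
      = ∑ i : Fin k, av (Fin.castLE hm₂ i) *
          relu ((∑ t, A2 (Fin.castLE hm₂ i) t * R t) + 1) := by
    have hmap := Finset.sum_map Finset.univ ⟨Fin.castLE hm₂, Fin.castLE_injective hm₂⟩
      (fun s => av s * relu ((∑ t, A2 s t * R t) + 1))
    simp only [Function.Embedding.coeFn_mk] at hmap
    rw [← hmap]
    symm
    apply Finset.sum_subset (Finset.subset_univ _)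
    intro s _ hs
    have hsk : ¬((s : ℕ) < k) := by
      intro hk'
      apply hs
      simp only [Finset.mem_map, Finset.mem_univ, Function.Embedding.coeFn_mk, true_and]
      exact ⟨⟨(s : ℕ), hk'⟩, Fin.ext rfl⟩
    simp [hav, hsk]
  rw [hreindex]
  apply Finset.sum_congr rfl
  intro i _
  have hav_i : av (Fin.castLE hm₂ i) = α i := by
    simp [hav, i.isLt]
  rcases hx with hx | hx
  · rw [Set.mem_iUnion] at hx
    obtain ⟨i₀, hxi₀⟩ := hx
    have hxin : ∀ j, zm i₀ j + ε ≤ x j ∧ x j ≤ zp i₀ j - ε := fun j => ⟨hxi₀.1 j, hxi₀.2 j⟩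
    have hxA : x ∈ A i₀ := hAlo i₀ (fun j => ⟨by linarith [(hxin j).1], by linarith [(hxin j).2]⟩)
    by_cases hii : i = i₀
    · subst hii
      rw [hcase1 i (Fin.castLE hm₂ i) rfl hxin, hav_i]
      simp [Set.indicator_of_mem hxA]
    · have hxAi : x ∉ A i := fun h => Set.disjoint_left.mp (hdisj i i₀ hii) h hxA
      have hout : ∃ c, x c ≤ zm i c ∨ zp i c ≤ x c := by
        by_contra h
        push_neg at h
        exact hxAi (hAlo i (fun j => ⟨(h j).1, (h j).2⟩))
      rw [hcase2 i (Fin.castLE hm₂ i) rfl hout]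
      simp [Set.indicator_of_notMem hxAi]
  · obtain ⟨hxX, hxU⟩ := hx
    have hnot : x ∉ Set.Icc (zm i) (zp i) := fun h => hxU (Set.mem_iUnion.mpr ⟨i, h⟩)
    have hout : ∃ c, x c ≤ zm i c ∨ zp i c ≤ x c := by
      by_contra h
      push_neg at h
      exact hnot (Set.mem_Icc.mpr ⟨fun j => (h j).1.le, fun j => (h j).2.le⟩)
    have hxAi : x ∉ A i := fun h => hnot (hAhi i h)
    rw [hcase2 i (Fin.castLE hm₂ i) rfl hout]
    simp [Set.indicator_of_notMem hxAi]

end Pantry
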